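/- arXiv:1602.02330 — 2 statements merged into one kernel-verified Lean document; each statement's English description precedes it below -/
import Mathlib

section
/- Let A be a measurable space, ν a probability measure on A, and κ a Markov kernel from A to ℝ. On a probability space let ξ_1, …, ξ_{N_B} be i.i.d. A-valued random variables with law ν, and let {X_{j,s} : 1 ≤ j ≤ N_B, 1 ≤ s ≤ N_F} be real random variables such that, conditionally on (ξ_1, …, ξ_{N_B}), the X_{j,s} are mutually independent and the conditional law of X_{j,s} is κ(ξ_j, ·). Write E₂X(a) = ∫ x κ(a, dx), E₂X²(a) = ∫ x² κ(a, dx), and E₁E₂X = ∫_A E₂X(a) ν(da). Assume |X_{j,s}| ≤ M₀ almost surely, |E₂X(a)| ≤ M₁ and E₂X²(a) − (E₂X(a))² ≤ σ₂² for ν-almost every a, |E₁E₂X| ≤ M₂, and ∫_A (E₂X(a))² ν(da) − (E₁E₂X)² ≤ σ₁². Then for every t > 0 and every θ ∈ (0,1): P{ (1/(N_B N_F)) Σ_{j=1}^{N_B} Σ_{s=1}^{N_F} X_{j,s} − E₁E₂X > t } ≤ N_B · exp( − ( (1/2)(1−θ)² N_F t² ) / ( σ₂² + (1/3)(M₀+M₁)(1−θ)t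 ) ) + exp( − ( (1/2) θ² N_B t² ) / ( σ₁² + (1/3)(M₁+M₂) θ t ) ). -/
set_option maxHeartbeats 1000000
open MeasureTheory ProbabilityTheory Real Nat
open scoped ENNReal

lemma fact_ge : ∀ n : ℕ, 2 * 3 ^ n ≤ (n + 2)! := by
  intro n
  induction n with
  | zero => simp [Nat.factorial]
  | succ k ih =>
    have : (k + 3)! = (k + 3) * (k + 2)! := rfl
    calc 2 * 3 ^ (k + 1) = 3 * (2 * 3 ^ k) := by ring
    _ ≤ 3 * (k + 2)! := by omega
    _ ≤ (k + 3) * (k + 2)! := by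
        have : (k+2)! ≥ 1 := Nat.one_le_iff_ne_zero.2 (Nat.factorial_ne_zero _)
        nlinarith
    _ = (k + 3)! := rfl

lemma exp_aux {x c : ℝ} (hx : |x| ≤ c) (hc : c < 3) :
    Real.exp x ≤ 1 + x + x ^ 2 / (2 * (1 - c / 3)) := by
  have hc0 : 0 ≤ c := le_trans (abs_nonneg x) hx
  have hsum : Summable fun n : ℕ => x ^ n / n ! := Real.summable_pow_div_factorial x
  have hexp : Real.exp x = ∑' n : ℕ, x ^ n / n ! := by
    rw [Real.exp_eq_exp_ℝ, NormedSpace.exp_eq_tsum_div]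
  have hs1 : Summable fun n : ℕ => x ^ (n + 1) / (n + 1)! := by
    exact (summable_nat_add_iff 1).2 hsum
  have hs2 : Summable fun n : ℕ => x ^ (n + 2) / (n + 2)! := by
    exact (summable_nat_add_iff 2).2 hsum
  have hsplit : Real.exp x = 1 + x + ∑' n : ℕ, x ^ (n + 2) / (n + 2)! := by
    rw [hexp, hsum.tsum_eq_zero_add]
    simp only [pow_zero, Nat.factorial_zero]
    rw [hs1.tsum_eq_zero_add]
    simp [Nat.factorial_one]
    ring
  rw [hsplit]
  have key : ∑' n : ℕ, x ^ (n + 2) / (n + 2)! ≤ x ^ 2 / (2 * (1 - c / 3)) := by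
    have hgeo : Summable fun n : ℕ => x ^ 2 / 2 * (c / 3) ^ n :=
      (summable_geometric_of_lt_one (by positivity) (by linarith)).mul_left _
    have hterm : ∀ n : ℕ, x ^ (n + 2) / (n + 2)! ≤ x ^ 2 / 2 * (c / 3) ^ n := by
      intro n
      have h1 : x ^ (n + 2) ≤ x ^ 2 * c ^ n := by
        calc x ^ (n + 2) ≤ |x ^ (n + 2)| := le_abs_self _
        _ = |x| ^ 2 * |x| ^ n := by rw [abs_pow]; ring
        _ ≤ |x| ^ 2 * c ^ n := by
            gcongr
        _ = x ^ 2 * c ^ n := by rw [sq_abs]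
      have h2 : (2 * 3 ^ n : ℝ) ≤ (n + 2)! := by
        exact_mod_cast fact_ge n
      have h3 : (0:ℝ) < (n + 2)! := by positivity
      rw [div_le_iff₀ h3]
      calc x ^ (n + 2) ≤ x ^ 2 * c ^ n := h1
      _ = (x ^ 2 / 2 * (c / 3) ^ n) * (2 * 3 ^ n) := by
          field_simp
          rw [mul_assoc, ← mul_pow, div_mul_cancel₀ c (by norm_num : (3:ℝ) ≠ 0)]
      _ ≤ (x ^ 2 / 2 * (c / 3) ^ n) * (n + 2)! := by
          gcongr
    calc ∑' n : ℕ, x ^ (n + 2) / (n + 2)! ≤ ∑' n : ℕ, x ^ 2 / 2 * (c / 3) ^ n :=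
        Summable.tsum_le_tsum hterm hs2 hgeo
    _ = x ^ 2 / 2 * (1 - c / 3)⁻¹ := by
        rw [tsum_mul_left, tsum_geometric_of_lt_one (by positivity) (by linarith)]
    _ = x ^ 2 / (2 * (1 - c / 3)) := by
        rw [div_mul_eq_div_div]
        rw [div_eq_mul_inv (x ^ 2 / 2)]
  linarith

lemma mgf_le_aux {Ω : Type*} [MeasurableSpace Ω] (μ : Measure Ω) [IsProbabilityMeasure μ]
    (Z : Ω → ℝ) (hZm : AEMeasurable Z μ) {b v l : ℝ} (hb : 0 ≤ b) (hv : 0 ≤ v)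
    (hbd : ∀ᵐ ω ∂μ, |Z ω| ≤ b) (hmean : ∫ ω, Z ω ∂μ = 0)
    (hvar : ∫ ω, (Z ω) ^ 2 ∂μ ≤ v) (hl : 0 ≤ l) (hlb : l * b < 3) :
    ∫ ω, Real.exp (l * Z ω) ∂μ ≤ Real.exp (v * l ^ 2 / (2 * (1 - l * b / 3))) := by
  set h : ℝ := (2 * (1 - l * b / 3))⁻¹ with hh_def
  have hD : 0 < 2 * (1 - l * b / 3) := by nlinarith
  have hh : 0 ≤ h := inv_nonneg.2 hD.le
  have intZ : Integrable Z μ := by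
    refine (integrable_const b).mono' hZm.aestronglyMeasurable ?_
    filter_upwards [hbd] with ω hω
    simpa [Real.norm_eq_abs] using hω
  have intZ2 : Integrable (fun ω => Z ω ^ 2) μ := by
    refine (integrable_const (b ^ 2)).mono' (hZm.pow_const 2).aestronglyMeasurable ?_
    filter_upwards [hbd] with ω hω
    rw [Real.norm_eq_abs, abs_pow]
    exact pow_le_pow_left₀ (abs_nonneg _) hω 2
  have intexp : Integrable (fun ω => Real.exp (l * Z ω)) μ := by
    refine (integrable_const (Real.exp (l * b))).mono'
      (Real.measurable_exp.comp_aemeasurable (hZm.const_mul l)).aestronglyMeasurable ?_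
    filter_upwards [hbd] with ω hω
    rw [Real.norm_eq_abs, abs_of_pos (Real.exp_pos _)]
    apply Real.exp_le_exp.2
    calc l * Z ω ≤ l * |Z ω| := by nlinarith [le_abs_self (Z ω)]
    _ ≤ l * b := by nlinarith
  have hpt : ∀ᵐ ω ∂μ, Real.exp (l * Z ω) ≤ 1 + l * Z ω + l ^ 2 * h * Z ω ^ 2 := by
    filter_upwards [hbd] with ω hω
    have habs : |l * Z ω| ≤ l * b := by
      rw [abs_mul, abs_of_nonneg hl]
      nlinarith
    have := exp_aux habs hlb
    calc Real.exp (l * Z ω) ≤ 1 + l * Z ω + (l * Z ω) ^ 2 / (2 * (1 - l * b / 3)) := this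
    _ = 1 + l * Z ω + l ^ 2 * h * Z ω ^ 2 := by
        rw [div_eq_mul_inv, ← hh_def]; ring
  have intRHS : Integrable (fun ω => 1 + l * Z ω + l ^ 2 * h * Z ω ^ 2) μ :=
    ((integrable_const (1:ℝ)).add (intZ.const_mul l)).add (intZ2.const_mul (l ^ 2 * h))
  calc ∫ ω, Real.exp (l * Z ω) ∂μ ≤ ∫ ω, (1 + l * Z ω + l ^ 2 * h * Z ω ^ 2) ∂μ :=
      integral_mono_ae intexp intRHS hpt
  _ = 1 + l * ∫ ω, Z ω ∂μ + l ^ 2 * h * ∫ ω, Z ω ^ 2 ∂μ := by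
      have e1 : ∫ ω, ((1 + l * Z ω) + l ^ 2 * h * Z ω ^ 2) ∂μ
          = (∫ ω, (1 + l * Z ω) ∂μ) + ∫ ω, l ^ 2 * h * Z ω ^ 2 ∂μ :=
        integral_add ((integrable_const (1:ℝ)).add (intZ.const_mul l)) (intZ2.const_mul _)
      have e2 : ∫ ω, (1 + l * Z ω) ∂μ = (∫ ω, (1:ℝ) ∂μ) + ∫ ω, l * Z ω ∂μ :=
        integral_add (integrable_const (1:ℝ)) (intZ.const_mul l)
      rw [e1, e2, integral_const_mul, integral_const_mul]
      simp
  _ ≤ 1 + l ^ 2 * h * v := by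
      rw [hmean]
      have : l ^ 2 * h * ∫ ω, Z ω ^ 2 ∂μ ≤ l ^ 2 * h * v := by
        apply mul_le_mul_of_nonneg_left hvar (by positivity)
      linarith
  _ ≤ Real.exp (l ^ 2 * h * v) := by
      have := Real.add_one_le_exp (l ^ 2 * h * v)
      linarith
  _ = Real.exp (v * l ^ 2 / (2 * (1 - l * b / 3))) := by
      rw [div_eq_mul_inv, ← hh_def]; ring_nf

lemma integral_pi_prod {ι : Type*} [Fintype ι] {β : ι → Type*} [∀ i, MeasurableSpace (β i)]
    (μ : (i : ι) → Measure (β i)) [∀ i, IsProbabilityMeasure (μ i)]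
    (f : (i : ι) → β i → ℝ) :
    ∫ x : (i : ι) → β i, ∏ i, f i (x i) ∂Measure.pi μ = ∏ i, ∫ y, f i y ∂μ i := by
  letI : ∀ i, MeasureSpace (β i) := fun i => ⟨μ i⟩
  exact MeasureTheory.integral_fintype_prod_eq_prod f

lemma bernstein_pi {ι : Type*} [Fintype ι] [DecidableEq ι] {β : ι → Type*}
    [∀ i, MeasurableSpace (β i)]
    (μ : (i : ι) → Measure (β i)) [∀ i, IsProbabilityMeasure (μ i)] (J : Finset ι)
    (Z : (i : ι) → β i → ℝ) (hZm : ∀ i ∈ J, Measurable (Z i))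
    {b v t : ℝ} (hb : 0 ≤ b) (hv : 0 ≤ v) (ht : 0 < t)
    (hbd : ∀ i ∈ J, ∀ᵐ y ∂μ i, |Z i y| ≤ b)
    (hmean : ∀ i ∈ J, ∫ y, Z i y ∂μ i = 0)
    (hvar : ∀ i ∈ J, ∫ y, (Z i y) ^ 2 ∂μ i ≤ v) :
    (Measure.pi μ {x | (J.card : ℝ) * t < ∑ i ∈ J, Z i (x i)}).toReal
      ≤ Real.exp (-((J.card : ℝ) * t ^ 2 / 2 / (v + b * t / 3))) := by
  classical
  set n : ℝ := (J.card : ℝ) with hn_def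
  have hn : 0 ≤ n := Nat.cast_nonneg _
  by_cases hv0 : v = 0
  · -- all Z i vanish a.e., so the set is null
    subst hv0
    have hZ0 : ∀ i ∈ J, ∀ᵐ y ∂μ i, Z i y = 0 := by
      intro i hi
      have hint : Integrable (fun y => Z i y ^ 2) (μ i) := by
        refine (integrable_const (b ^ 2)).mono'
          ((hZm i hi).pow_const 2).aestronglyMeasurable ?_
        filter_upwards [hbd i hi] with y hy
        rw [Real.norm_eq_abs, abs_pow]
        exact pow_le_pow_left₀ (abs_nonneg _) hy 2
      have h0 : ∫ y, Z i y ^ 2 ∂μ i = 0 :=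
        le_antisymm (hvar i hi) (integral_nonneg fun y => sq_nonneg _)
      have := (integral_eq_zero_iff_of_nonneg (fun y => sq_nonneg (Z i y)) hint).1 h0
      filter_upwards [this] with y hy
      exact pow_eq_zero_iff (n := 2) (by norm_num) |>.1 hy
    have hae : ∀ᵐ x ∂Measure.pi μ, ∀ i, i ∈ J → Z i (x i) = 0 := by
      rw [ae_all_iff]
      intro i
      by_cases hi : i ∈ J
      · filter_upwards [Measure.tendsto_eval_ae_ae.eventually (hZ0 i hi)] with x hx _
        exact hx
      · exact Filter.Eventually.of_forall fun x hmem => absurd hmem hi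
    have hnull : Measure.pi μ {x | n * t < ∑ i ∈ J, Z i (x i)} = 0 := by
      refine measure_mono_null (fun x hx => ?_) (ae_iff.1 hae)
      simp only [Set.mem_setOf_eq] at hx ⊢
      intro hall
      have : ∑ i ∈ J, Z i (x i) = 0 := Finset.sum_eq_zero fun i hi => hall i hi
      rw [this] at hx
      nlinarith
    rw [hnull]
    simp [Real.exp_nonneg]
  · have hvpos : 0 < v := lt_of_le_of_ne hv (Ne.symm hv0)
    set D : ℝ := v + b * t / 3 with hD_def
    have hD : 0 < D := by positivity
    set l : ℝ := t / D with hl_def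
    have hl : 0 < l := div_pos ht hD
    have hlb : l * b < 3 := by
      rw [hl_def, div_mul_eq_mul_div, div_lt_iff₀ hD]
      have h3 : 3 * D = 3 * v + b * t := by rw [hD_def]; ring
      nlinarith [mul_comm t b, h3]
    set W : ((i : ι) → β i) → ℝ := fun x => ∑ i ∈ J, Z i (x i) with hW_def
    have hWm : Measurable W :=
      Finset.measurable_sum J fun i hi => (hZm i hi).comp (measurable_pi_apply i)
    have hbdW : ∀ᵐ x ∂Measure.pi μ, ∀ i, i ∈ J → |Z i (x i)| ≤ b := by
      rw [ae_all_iff]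
      intro i
      by_cases hi : i ∈ J
      · filter_upwards [Measure.tendsto_eval_ae_ae.eventually (hbd i hi)] with x hx _
        exact hx
      · exact Filter.Eventually.of_forall fun x hmem => absurd hmem hi
    have intexp : Integrable (fun x => Real.exp (l * W x)) (Measure.pi μ) := by
      refine (integrable_const (Real.exp (l * (n * b)))).mono'
        (Real.measurable_exp.comp (hWm.const_mul l)).aestronglyMeasurable ?_
      filter_upwards [hbdW] with x hx
      rw [Real.norm_eq_abs, abs_of_pos (Real.exp_pos _), Real.exp_le_exp]
      have hWb : W x ≤ n * b := by
        calc W x ≤ ∑ i ∈ J, |Z i (x i)| :=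
            Finset.sum_le_sum fun i hi => le_abs_self _
        _ ≤ ∑ _i ∈ J, b := Finset.sum_le_sum fun i hi => hx i hi
        _ = n * b := by rw [Finset.sum_const, nsmul_eq_mul]
      nlinarith
    have chern := measure_ge_le_exp_mul_mgf (μ := Measure.pi μ) (X := W) (n * t) hl.le intexp
    set g : ℝ := v * l ^ 2 / (2 * (1 - l * b / 3)) with hg_def
    -- mgf bound
    have hmgf : mgf W (Measure.pi μ) l ≤ Real.exp g ^ J.card := by
      have hprod : mgf W (Measure.pi μ) l
          = ∏ i, ∫ y, (if i ∈ J then Real.exp (l * Z i y) else 1) ∂μ i := by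
        rw [mgf, ← integral_pi_prod μ (fun i y => if i ∈ J then Real.exp (l * Z i y) else 1)]
        congr 1
        funext x
        show Real.exp (l * ∑ i ∈ J, Z i (x i)) = _
        rw [Finset.prod_ite_mem, Finset.univ_inter, ← Real.exp_sum, ← Finset.mul_sum]
      rw [hprod]
      calc ∏ i, ∫ y, (if i ∈ J then Real.exp (l * Z i y) else 1) ∂μ i
          ≤ ∏ i, (if i ∈ J then Real.exp g else 1) := by
            refine Finset.prod_le_prod (fun i _ => integral_nonneg fun y => ?_)
              (fun i _ => ?_)
            · split <;> positivity
            · by_cases hi : i ∈ J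
              · simp only [hi, if_true]
                exact mgf_le_aux (μ i) (Z i) (hZm i hi).aemeasurable hb hv
                  (hbd i hi) (hmean i hi) (hvar i hi) hl.le hlb
              · simp [hi]
        _ = Real.exp g ^ J.card := by
            rw [Finset.prod_ite_mem, Finset.univ_inter, Finset.prod_const]
    have hset : (Measure.pi μ {x | n * t < W x}).toReal
        ≤ (Measure.pi μ {x | n * t ≤ W x}).toReal := by
      exact ENNReal.toReal_mono (measure_ne_top _ _)
        (measure_mono (Set.setOf_subset_setOf.2 fun x => le_of_lt))
    calc (Measure.pi μ {x | n * t < W x}).toReal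
        ≤ (Measure.pi μ {x | n * t ≤ W x}).toReal := hset
    _ ≤ Real.exp (-l * (n * t)) * mgf W (Measure.pi μ) l := chern
    _ ≤ Real.exp (-l * (n * t)) * Real.exp g ^ J.card := by
        exact mul_le_mul_of_nonneg_left hmgf (Real.exp_nonneg _)
    _ = Real.exp (-l * (n * t) + n * g) := by
        rw [← Real.exp_nat_mul, ← Real.exp_add, hn_def]
    _ = Real.exp (-(n * t ^ 2 / 2 / D)) := by
        congr 1
        have h1 : 1 - l * b / 3 = v / D := by
          rw [hl_def]
          field_simp
          ring
        rw [hg_def, h1, hl_def]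
        field_simp
        ring

lemma pi_eval_apply {ι : Type*} [Fintype ι] {β : ι → Type*} [∀ i, MeasurableSpace (β i)]
    (μ : (i : ι) → Measure (β i)) [∀ i, IsProbabilityMeasure (μ i)] (i : ι)
    {B : Set (β i)} (hB : MeasurableSet B) :
    Measure.pi μ (Function.eval i ⁻¹' B) = μ i B := by
  classical
  rw [Set.eval_preimage, Measure.pi_pi]
  rw [Finset.prod_eq_single_of_mem i (Finset.mem_univ i)]
  · rw [Function.update_self]
  · intro j _ hj
    rw [Function.update_of_ne hj]
    exact measure_univ

lemma measurable_pi_measure {γ : Type*} [MeasurableSpace γ] {ι : Type*} [Fintype ι]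
    {β : ι → Type*} [∀ i, MeasurableSpace (β i)]
    (μ : γ → (i : ι) → Measure (β i)) [∀ c i, IsProbabilityMeasure (μ c i)]
    (hμ : ∀ i, Measurable fun c => μ c i) :
    Measurable fun c => Measure.pi (μ c) := by
  apply Measure.measurable_of_measurable_coe
  intro s hs
  apply MeasurableSpace.induction_on_inter generateFrom_pi.symm isPiSystem_pi
    (C := fun s _ => Measurable fun c => Measure.pi (μ c) s) (by simp)
    ?_ ?_ ?_ s hs
  · rintro _ ⟨f, hf, rfl⟩
    simp only [Set.mem_univ_pi, Set.mem_setOf_eq] at hf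
    have : (fun c => Measure.pi (μ c) (Set.pi Set.univ f)) =
        fun c => ∏ i, μ c i (f i) := by
      funext c
      exact Measure.pi_pi _ _
    rw [this]
    exact Finset.measurable_prod _ fun i _ =>
      (Measure.measurable_coe (hf i)).comp (hμ i)
  · intro u hu hmeas
    have : (fun c => Measure.pi (μ c) uᶜ) = fun c => 1 - Measure.pi (μ c) u := by
      funext c
      rw [measure_compl hu (measure_ne_top _ _), measure_univ]
    rw [this]
    exact Measurable.const_sub hmeas 1
  · intro f hdisj hfm hmeas
    have : (fun c => Measure.pi (μ c) (⋃ k, f k)) =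
        fun c => ∑' k, Measure.pi (μ c) (f k) := by
      funext c
      exact measure_iUnion hdisj hfm
    rw [this]
    exact Measurable.ennreal_tsum hmeas

/-- Large deviation bound for two-step ("Procrustean") hierarchical sampling: `N_B` base
points `ξ_j` are drawn i.i.d. from `ν` on `A`, and for each `j`, `N_F` conditionally
i.i.d. real observations `X_{j,s}` are drawn from the Markov kernel `κ (ξ_j)`, all fibres
being conditionally independent (this is encoded by the joint law hypothesis `hlaw`).
Then the deviation of the double empirical average from the double mean `∫∫ x κ(a,dx) ν(da)`
satisfies a Bernstein-type bound combining a fibrewise term and a base term. -/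
theorem stmt0
    {Ω : Type*} [MeasurableSpace Ω] (P : Measure Ω) [IsProbabilityMeasure P]
    {A : Type*} [MeasurableSpace A] (ν : Measure A) [IsProbabilityMeasure ν]
    (κ : Kernel A ℝ) [IsMarkovKernel κ]
    (NB NF : ℕ) (hNB : 0 < NB) (hNF : 0 < NF)
    (ξ : Fin NB → Ω → A) (X : Fin NB → Fin NF → Ω → ℝ)
    (hlaw : P.map (fun ω => ((fun j => ξ j ω), fun p : Fin NB × Fin NF => X p.1 p.2 ω))
      = (Measure.pi fun _ : Fin NB => ν).bind fun a =>
          Measure.map (fun x => (a, x)) (Measure.pi fun p : Fin NB × Fin NF => κ (a p.1)))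
    (M₀ M₁ M₂ σ₁ σ₂ : ℝ)
    (hM₀ : ∀ j s, ∀ᵐ ω ∂P, |X j s ω| ≤ M₀)
    (hM₁ : ∀ᵐ a ∂ν, |∫ x, x ∂(κ a)| ≤ M₁)
    (hσ₂ : ∀ᵐ a ∂ν, (∫ x, x ^ 2 ∂(κ a)) - (∫ x, x ∂(κ a)) ^ 2 ≤ σ₂ ^ 2)
    (hM₂ : |∫ a, (∫ x, x ∂(κ a)) ∂ν| ≤ M₂)
    (hσ₁ : (∫ a, (∫ x, x ∂(κ a)) ^ 2 ∂ν) - (∫ a, (∫ x, x ∂(κ a)) ∂ν) ^ 2 ≤ σ₁ ^ 2)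
    (t : ℝ) (ht : 0 < t) (θ : ℝ) (hθ : θ ∈ Set.Ioo (0 : ℝ) 1) :
    (P {ω | (1 / ((NB : ℝ) * (NF : ℝ))) * ∑ j, ∑ s, X j s ω
          - ∫ a, (∫ x, x ∂(κ a)) ∂ν > t}).toReal
      ≤ (NB : ℝ) * Real.exp
            (-((1 / 2 * (1 - θ) ^ 2 * (NF : ℝ) * t ^ 2)
              / (σ₂ ^ 2 + 1 / 3 * (M₀ + M₁) * (1 - θ) * t)))
        + Real.exp
            (-((1 / 2 * θ ^ 2 * (NB : ℝ) * t ^ 2)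
              / (σ₁ ^ 2 + 1 / 3 * (M₁ + M₂) * θ * t))) := by
  classical
  obtain ⟨hθ0, hθ1⟩ := hθ
  -- the fibre mean function
  set m₀ : A → ℝ := fun b => ∫ x, x ∂(κ b) with hm₀_def
  have hm₀m : Measurable m₀ := by
    have h : StronglyMeasurable fun p : A × ℝ => p.2 := measurable_snd.stronglyMeasurable
    exact (h.integral_kernel_prod_right' (κ := κ)).measurable
  set C : ℝ := ∫ a, m₀ a ∂ν with hC_def
  set νB : Measure (Fin NB → A) := Measure.pi (fun _ : Fin NB => ν) with hνB_def
  set K : (Fin NB → A) → Measure (Fin NB × Fin NF → ℝ) :=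
    fun a => Measure.pi (fun p : Fin NB × Fin NF => κ (a p.1)) with hK_def
  have hKm : Measurable K :=
    measurable_pi_measure _ (fun p => (Kernel.measurable κ).comp (measurable_pi_apply p.1))
  set KK : Kernel (Fin NB → A) (Fin NB × Fin NF → ℝ) := ⟨K, hKm⟩ with hKK_def
  haveI : IsMarkovKernel KK := ⟨fun a => by
    show IsProbabilityMeasure (K a); rw [hK_def]; infer_instance⟩
  set m' : (Fin NB → A) → Measure ((Fin NB → A) × (Fin NB × Fin NF → ℝ)) :=
    fun a => (K a).map (fun x => (a, x)) with hm'_def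
  have hm'coe : ∀ a, ∀ {s}, MeasurableSet s → m' a s = K a (Prod.mk a ⁻¹' s) := by
    intro a s hs
    rw [hm'_def]
    exact Measure.map_apply measurable_prodMk_left hs
  have hm'm : Measurable m' := by
    apply Measure.measurable_of_measurable_coe
    intro s hs
    have h : (fun a => m' a s) = fun a => KK a (Prod.mk a ⁻¹' s) := by
      funext a; exact hm'coe a hs
    rw [h]
    exact Kernel.measurable_kernel_prodMk_left hs
  set T : Ω → (Fin NB → A) × (Fin NB × Fin NF → ℝ) :=
    fun ω => ((fun j => ξ j ω), fun p : Fin NB × Fin NF => X p.1 p.2 ω) with hT_def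
  have hbind_univ : νB.bind m' Set.univ = 1 := by
    rw [Measure.bind_apply MeasurableSet.univ hm'm.aemeasurable]
    have : ∀ a, m' a Set.univ = 1 := by
      intro a
      rw [hm'coe a MeasurableSet.univ, Set.preimage_univ]
      have : IsProbabilityMeasure (K a) := by rw [hK_def]; infer_instance
      exact measure_univ
    simp only [this, lintegral_const, one_mul, measure_univ]
  have hT : AEMeasurable T P := by
    by_contra hc
    rw [Measure.map_of_not_aemeasurable hc] at hlaw
    have h0 := congrArg (fun μ => μ Set.univ) hlaw
    simp only [Measure.coe_zero, Pi.zero_apply] at h0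
    rw [hbind_univ] at h0
    exact one_ne_zero h0.symm
  have htransfer : ∀ {S}, MeasurableSet S → P (T ⁻¹' S) = ∫⁻ a, m' a S ∂νB := by
    intro S hS
    rw [← Measure.map_apply_of_aemeasurable hT hS, hlaw, Measure.bind_apply hS hm'm.aemeasurable]
  -- bad set of fibre values
  set Bbad : Set ℝ := {y | ¬ |y| ≤ M₀} with hBbad_def
  have hBbadm : MeasurableSet Bbad := (measurableSet_le measurable_abs measurable_const).compl
  have hMa : ∀ᵐ a ∂νB, ∀ j : Fin NB, κ (a j) Bbad = 0 := by
    rw [ae_all_iff]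
    intro j
    set s0 : Fin NF := ⟨0, hNF⟩
    set Njs : Set ((Fin NB → A) × (Fin NB × Fin NF → ℝ)) := {q | q.2 (j, s0) ∈ Bbad}
      with hNjs_def
    have hNjsm : MeasurableSet Njs :=
      ((measurable_pi_apply (j, s0)).comp measurable_snd) hBbadm
    have hP0 : P (T ⁻¹' Njs) = 0 := by
      have h := ae_iff.1 (hM₀ j s0)
      exact h
    rw [htransfer hNjsm] at hP0
    have hform : ∀ a, m' a Njs = κ (a j) Bbad := by
      intro a
      rw [hm'coe a hNjsm]
      have hpre : (Prod.mk a ⁻¹' Njs) = Function.eval (j, s0) ⁻¹' Bbad := rfl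
      rw [hpre, hK_def]
      exact pi_eval_apply _ (j, s0) hBbadm
    simp only [hform] at hP0
    have hmeas : Measurable fun a : Fin NB → A => κ (a j) Bbad :=
      (Measure.measurable_coe hBbadm).comp ((Kernel.measurable κ).comp (measurable_pi_apply j))
    have := (lintegral_eq_zero_iff hmeas).1 hP0
    filter_upwards [this] with a ha
    exact ha
  have hGood : ∀ᵐ a ∂νB, ∀ j : Fin NB,
      |m₀ (a j)| ≤ M₁ ∧ (∫ x, x ^ 2 ∂(κ (a j))) - m₀ (a j) ^ 2 ≤ σ₂ ^ 2
        ∧ κ (a j) Bbad = 0 := by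
    have h1 : ∀ᵐ a ∂νB, ∀ j : Fin NB, |m₀ (a j)| ≤ M₁ ∧
        (∫ x, x ^ 2 ∂(κ (a j))) - m₀ (a j) ^ 2 ≤ σ₂ ^ 2 := by
      rw [ae_all_iff]
      intro j
      have h2 : ∀ᵐ b ∂ν, |m₀ b| ≤ M₁ ∧ (∫ x, x ^ 2 ∂(κ b)) - m₀ b ^ 2 ≤ σ₂ ^ 2 :=
        hM₁.and hσ₂
      exact (Measure.tendsto_eval_ae_ae (μ := fun _ : Fin NB => ν) (i := j)).eventually h2
    filter_upwards [h1, hMa] with a ha hb j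
    exact ⟨(ha j).1, (ha j).2, hb j⟩
  -- nonnegativity of the constants
  haveI : (ae νB).NeBot := ae_neBot.2 (IsProbabilityMeasure.ne_zero νB)
  obtain ⟨a0, ha0⟩ := hGood.exists
  have hM₀0 : 0 ≤ M₀ := by
    obtain ⟨-, -, h3⟩ := ha0 ⟨0, hNB⟩
    have : ∀ᵐ y ∂(κ (a0 ⟨0, hNB⟩)), |y| ≤ M₀ := by
      rw [ae_iff]; exact h3
    obtain ⟨y, hy⟩ := this.exists
    exact le_trans (abs_nonneg y) hy
  have hM₁0 : 0 ≤ M₁ := le_trans (abs_nonneg _) (ha0 ⟨0, hNB⟩).1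
  have hM₂0 : 0 ≤ M₂ := le_trans (abs_nonneg _) hM₂
  set u₂ : ℝ := (1 - θ) * t with hu₂_def
  set u₁ : ℝ := θ * t with hu₁_def
  have hu₂ : 0 < u₂ := by rw [hu₂_def]; nlinarith
  have hu₁ : 0 < u₁ := by rw [hu₁_def]; nlinarith
  set B₂ : ℝ := Real.exp (-((NF : ℝ) * u₂ ^ 2 / 2 / (σ₂ ^ 2 + (M₀ + M₁) * u₂ / 3)))
    with hB₂_def
  set B₁ : ℝ := Real.exp (-((NB : ℝ) * u₁ ^ 2 / 2 / (σ₁ ^ 2 + (M₁ + M₂) * u₁ / 3)))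
    with hB₁_def
  set Ej : (Fin NB → A) → Fin NB → Set (Fin NB × Fin NF → ℝ) :=
    fun a j => {x | (NF : ℝ) * u₂ < ∑ s : Fin NF, (x (j, s) - m₀ (a j))} with hEj_def
  have hEjm : ∀ a j, MeasurableSet (Ej a j) := fun a j =>
    measurableSet_lt measurable_const (Finset.measurable_sum _ fun s _ =>
      (measurable_pi_apply (j, s)).sub measurable_const)
  have hfib : ∀ a : Fin NB → A, (∀ j : Fin NB,
      |m₀ (a j)| ≤ M₁ ∧ (∫ x, x ^ 2 ∂(κ (a j))) - m₀ (a j) ^ 2 ≤ σ₂ ^ 2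
        ∧ κ (a j) Bbad = 0) →
      ∀ j : Fin NB, (K a (Ej a j)).toReal ≤ B₂ := by
    intro a ha j
    have hinj : Function.Injective (fun s : Fin NF => ((j, s) : Fin NB × Fin NF)) := by
      intro s1 s2 h
      exact (Prod.ext_iff.1 h).2
    set J : Finset (Fin NB × Fin NF) := Finset.image (fun s => (j, s)) Finset.univ
      with hJ_def
    have hJcard : J.card = NF := by
      rw [hJ_def, Finset.card_image_of_injective _ hinj, Finset.card_univ, Fintype.card_fin]
    have hfst : ∀ p ∈ J, p.1 = j := by
      intro p hp
      obtain ⟨s, -, rfl⟩ := Finset.mem_image.1 hp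
      rfl
    have hae : ∀ᵐ y ∂(κ (a j)), |y| ≤ M₀ := by
      rw [ae_iff]; exact (ha j).2.2
    have hint1 : Integrable (fun y : ℝ => y) (κ (a j)) := by
      refine (integrable_const M₀).mono' aestronglyMeasurable_id ?_
      filter_upwards [hae] with y hy
      simpa [Real.norm_eq_abs] using hy
    have hint2 : Integrable (fun y : ℝ => y ^ 2) (κ (a j)) := by
      refine (integrable_const (M₀ ^ 2)).mono'
        (measurable_id.pow_const 2).aestronglyMeasurable ?_
      filter_upwards [hae] with y hy
      rw [Real.norm_eq_abs, abs_pow]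
      exact pow_le_pow_left₀ (abs_nonneg _) hy 2
    have hiz : ∫ y, y ∂(κ (a j)) = m₀ (a j) := rfl
    have hbd : ∀ p ∈ J, ∀ᵐ y ∂(κ (a p.1)), |y - m₀ (a p.1)| ≤ M₀ + M₁ := by
      intro p hp
      rw [hfst p hp]
      filter_upwards [hae] with y hy
      have h1 := abs_le.1 hy
      have h2 := abs_le.1 (ha j).1
      exact abs_le.2 ⟨by linarith, by linarith⟩
    have hmean : ∀ p ∈ J, ∫ y, (y - m₀ (a p.1)) ∂(κ (a p.1)) = 0 := by
      intro p hp
      rw [hfst p hp, integral_sub hint1 (integrable_const _), integral_const, hiz]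
      simp
    have hvar : ∀ p ∈ J, ∫ y, (y - m₀ (a p.1)) ^ 2 ∂(κ (a p.1)) ≤ σ₂ ^ 2 := by
      intro p hp
      rw [hfst p hp]
      have hexp : (fun y : ℝ => (y - m₀ (a j)) ^ 2)
          = fun y : ℝ => y ^ 2 - 2 * m₀ (a j) * y + m₀ (a j) ^ 2 := by
        funext y; ring
      rw [hexp]
      have i12 : Integrable (fun y : ℝ => y ^ 2 - 2 * m₀ (a j) * y) (κ (a j)) :=
        hint2.sub (hint1.const_mul _)
      have e1 : ∫ y, (y ^ 2 - 2 * m₀ (a j) * y + m₀ (a j) ^ 2) ∂(κ (a j))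
          = (∫ y, (y ^ 2 - 2 * m₀ (a j) * y) ∂(κ (a j)))
            + ∫ _y : ℝ, m₀ (a j) ^ 2 ∂(κ (a j)) :=
        integral_add i12 (integrable_const _)
      have e2 : ∫ y, (y ^ 2 - 2 * m₀ (a j) * y) ∂(κ (a j))
          = (∫ y, y ^ 2 ∂(κ (a j))) - ∫ y, 2 * m₀ (a j) * y ∂(κ (a j)) :=
        integral_sub hint2 (hint1.const_mul _)
      have e3 : ∫ y, 2 * m₀ (a j) * y ∂(κ (a j)) = 2 * m₀ (a j) * m₀ (a j) := by
        rw [integral_const_mul, hiz]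
      have e4 : ∫ _y : ℝ, m₀ (a j) ^ 2 ∂(κ (a j)) = m₀ (a j) ^ 2 := by
        rw [integral_const]; simp
      rw [e1, e2, e3, e4]
      have h3 := (ha j).2.1
      nlinarith [sq_nonneg (m₀ (a j))]
    have key := bernstein_pi (μ := fun p : Fin NB × Fin NF => κ (a p.1)) J
      (fun p y => y - m₀ (a p.1)) (fun p _ => measurable_id.sub measurable_const)
      (b := M₀ + M₁) (v := σ₂ ^ 2) (t := u₂) (by linarith) (sq_nonneg σ₂) hu₂
      hbd hmean hvar
    have hsetEq : {x : Fin NB × Fin NF → ℝ |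
        (J.card : ℝ) * u₂ < ∑ p ∈ J, (x p - m₀ (a p.1))} = Ej a j := by
      ext x
      simp only [Set.mem_setOf_eq, hJcard, hEj_def]
      rw [hJ_def, Finset.sum_image (fun s1 _ s2 _ h => hinj h)]
    rw [hsetEq, hJcard] at key
    exact key
  -- base large deviation set
  set Hb : Set (Fin NB → A) := {a | (NB : ℝ) * u₁ < ∑ j : Fin NB, (m₀ (a j) - C)}
    with hHb_def
  have hHbm : MeasurableSet Hb := measurableSet_lt measurable_const
    (Finset.measurable_sum _ fun j _ =>
      (hm₀m.comp (measurable_pi_apply j)).sub measurable_const)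
  have hB₂0 : 0 ≤ B₂ := by rw [hB₂_def]; positivity
  have hB₁0 : 0 ≤ B₁ := by rw [hB₁_def]; positivity
  have hbase : (νB Hb).toReal ≤ B₁ := by
    have hintm : Integrable m₀ ν := by
      refine (integrable_const M₁).mono' hm₀m.aestronglyMeasurable ?_
      filter_upwards [hM₁] with b hb
      simpa [Real.norm_eq_abs] using hb
    have hintm2 : Integrable (fun b => m₀ b ^ 2) ν := by
      refine (integrable_const (M₁ ^ 2)).mono' (hm₀m.pow_const 2).aestronglyMeasurable ?_
      filter_upwards [hM₁] with b hb
      rw [Real.norm_eq_abs, abs_pow]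
      exact pow_le_pow_left₀ (abs_nonneg _) hb 2
    have hCint : ∫ b, m₀ b ∂ν = C := hC_def.symm
    have hbd : ∀ j ∈ (Finset.univ : Finset (Fin NB)), ∀ᵐ b ∂ν, |m₀ b - C| ≤ M₁ + M₂ := by
      intro j _
      filter_upwards [hM₁] with b hb
      have h1 := abs_le.1 (show |m₀ b| ≤ M₁ from hb)
      have h2 := abs_le.1 hM₂
      exact abs_le.2 ⟨by linarith, by linarith⟩
    have hmean : ∀ j ∈ (Finset.univ : Finset (Fin NB)), ∫ b, (m₀ b - C) ∂ν = 0 := by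
      intro j _
      rw [integral_sub hintm (integrable_const _), integral_const, hCint]
      simp
    have hvar : ∀ j ∈ (Finset.univ : Finset (Fin NB)), ∫ b, (m₀ b - C) ^ 2 ∂ν ≤ σ₁ ^ 2 := by
      intro j _
      have hexp : (fun b : A => (m₀ b - C) ^ 2)
          = fun b : A => m₀ b ^ 2 - 2 * C * m₀ b + C ^ 2 := by
        funext b; ring
      rw [hexp]
      have i12 : Integrable (fun b : A => m₀ b ^ 2 - 2 * C * m₀ b) ν :=
        hintm2.sub (hintm.const_mul _)
      have e1 : ∫ b, (m₀ b ^ 2 - 2 * C * m₀ b + C ^ 2) ∂ν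
          = (∫ b, (m₀ b ^ 2 - 2 * C * m₀ b) ∂ν) + ∫ _b : A, C ^ 2 ∂ν :=
        integral_add i12 (integrable_const _)
      have e2 : ∫ b, (m₀ b ^ 2 - 2 * C * m₀ b) ∂ν
          = (∫ b, m₀ b ^ 2 ∂ν) - ∫ b, 2 * C * m₀ b ∂ν :=
        integral_sub hintm2 (hintm.const_mul _)
      have e3 : ∫ b, 2 * C * m₀ b ∂ν = 2 * C * C := by
        rw [integral_const_mul, hCint]
      have e4 : ∫ _b : A, C ^ 2 ∂ν = C ^ 2 := by
        rw [integral_const]; simp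
      rw [e1, e2, e3, e4]
      have hσ₁' : (∫ a, m₀ a ^ 2 ∂ν) - C ^ 2 ≤ σ₁ ^ 2 := hσ₁
      nlinarith [sq_nonneg C]
    have key := bernstein_pi (μ := fun _ : Fin NB => ν) Finset.univ
      (fun _ b => m₀ b - C) (fun _ _ => hm₀m.sub measurable_const)
      (b := M₁ + M₂) (v := σ₁ ^ 2) (t := u₁) (by linarith) (sq_nonneg σ₁) hu₁
      hbd hmean hvar
    have hcard : (Finset.univ : Finset (Fin NB)).card = NB := by
      rw [Finset.card_univ, Fintype.card_fin]
    rw [hcard] at key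
    exact key
  -- the event sets
  set SxF : Set (Fin NB × Fin NF → ℝ) :=
    {x | 1 / ((NB : ℝ) * (NF : ℝ)) * ∑ j, ∑ s, x (j, s) - C > t} with hSxF_def
  set Sx : Set ((Fin NB → A) × (Fin NB × Fin NF → ℝ)) :=
    {q | 1 / ((NB : ℝ) * (NF : ℝ)) * ∑ j, ∑ s, q.2 (j, s) - C > t} with hSx_def
  have hSxm : MeasurableSet Sx := by
    have hf : Measurable fun q : (Fin NB → A) × (Fin NB × Fin NF → ℝ) =>
        1 / ((NB : ℝ) * (NF : ℝ)) * ∑ j, ∑ s, q.2 (j, s) - C :=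
      ((Finset.measurable_sum _ fun j _ => Finset.measurable_sum _ fun s _ =>
        (measurable_pi_apply ((j, s) : Fin NB × Fin NF)).comp
          measurable_snd).const_mul _).sub measurable_const
    exact measurableSet_lt measurable_const hf
  have hm'Sx : ∀ a, m' a Sx = K a SxF := by
    intro a
    rw [hm'coe a hSxm]
    rfl
  have hNB0 : (0 : ℝ) < NB := Nat.cast_pos.2 hNB
  have hNF0 : (0 : ℝ) < NF := Nat.cast_pos.2 hNF
  haveI hKP : ∀ a, IsProbabilityMeasure (K a) := fun a => by rw [hK_def]; infer_instance
  -- pointwise bound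
  have hkey : ∀ᵐ a ∂νB, K a SxF
      ≤ (NB : ℝ≥0∞) * ENNReal.ofReal B₂ + Hb.indicator 1 a := by
    filter_upwards [hGood] with a ha
    by_cases hmem : a ∈ Hb
    · rw [Set.indicator_of_mem hmem, Pi.one_apply]
      haveI := hKP a
      calc K a SxF ≤ 1 := prob_le_one
      _ ≤ (NB : ℝ≥0∞) * ENNReal.ofReal B₂ + 1 := le_add_self
    · rw [Set.indicator_of_notMem hmem, add_zero]
      have hsub : SxF ⊆ ⋃ j ∈ (Finset.univ : Finset (Fin NB)), Ej a j := by
        intro x hx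
        by_contra hnot
        simp only [Set.mem_iUnion, not_exists, Finset.mem_univ, exists_prop, true_and,
          hEj_def, Set.mem_setOf_eq, not_lt] at hnot
        have hmem' : ¬ ((NB : ℝ) * u₁ < ∑ j : Fin NB, (m₀ (a j) - C)) := hmem
        push_neg at hmem'
        have h1 : ∀ j : Fin NB, ∑ s : Fin NF, x (j, s) ≤ (NF : ℝ) * u₂ + NF * m₀ (a j) := by
          intro j
          have hj := hnot j
          rw [Finset.sum_sub_distrib, Finset.sum_const, Finset.card_univ,
            Fintype.card_fin, nsmul_eq_mul] at hj
          linarith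
        have h2 : ∑ j : Fin NB, (m₀ (a j) - C) = (∑ j : Fin NB, m₀ (a j)) - NB * C := by
          rw [Finset.sum_sub_distrib, Finset.sum_const, Finset.card_univ,
            Fintype.card_fin, nsmul_eq_mul]
        have h3 : ∑ j : Fin NB, ∑ s : Fin NF, x (j, s)
            ≤ (NB : ℝ) * NF * u₂ + NF * ((NB : ℝ) * u₁ + NB * C) := by
          calc ∑ j : Fin NB, ∑ s : Fin NF, x (j, s)
              ≤ ∑ j : Fin NB, ((NF : ℝ) * u₂ + NF * m₀ (a j)) :=
              Finset.sum_le_sum fun j _ => h1 j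
          _ = (NB : ℝ) * NF * u₂ + NF * ∑ j : Fin NB, m₀ (a j) := by
              rw [Finset.sum_add_distrib, Finset.sum_const, Finset.card_univ,
                Fintype.card_fin, nsmul_eq_mul, ← Finset.mul_sum]
              ring
          _ ≤ (NB : ℝ) * NF * u₂ + NF * ((NB : ℝ) * u₁ + NB * C) := by
              have h4 : ∑ j : Fin NB, m₀ (a j) ≤ (NB : ℝ) * u₁ + NB * C := by
                have := hmem'
                rw [h2] at this
                linarith
              nlinarith
        have h5 : ∑ j : Fin NB, ∑ s : Fin NF, x (j, s) ≤ (NB : ℝ) * NF * (t + C) := by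
          have hu : u₁ + u₂ = t := by rw [hu₁_def, hu₂_def]; ring
          have he : (NB : ℝ) * NF * (t + C)
              = (NB : ℝ) * NF * u₂ + NF * ((NB : ℝ) * u₁ + NB * C) := by
            rw [← hu]; ring
          linarith
        have hx' : t < 1 / ((NB : ℝ) * (NF : ℝ)) * ∑ j, ∑ s, x (j, s) - C := hx
        have h6 : 1 / ((NB : ℝ) * (NF : ℝ)) * ∑ j, ∑ s, x (j, s) ≤ t + C := by
          rw [div_mul_eq_mul_div, one_mul, div_le_iff₀ (by positivity)]
          calc ∑ j : Fin NB, ∑ s : Fin NF, x (j, s) ≤ (NB : ℝ) * NF * (t + C) := h5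
          _ = (t + C) * ((NB : ℝ) * NF) := by ring
        linarith
      calc K a SxF ≤ K a (⋃ j ∈ (Finset.univ : Finset (Fin NB)), Ej a j) :=
          measure_mono hsub
      _ ≤ ∑ j : Fin NB, K a (Ej a j) := measure_biUnion_finset_le _ _
      _ ≤ ∑ _j : Fin NB, ENNReal.ofReal B₂ := Finset.sum_le_sum fun j _ =>
          (ENNReal.le_ofReal_iff_toReal_le (measure_ne_top _ _) hB₂0).2 (hfib a ha j)
      _ = (NB : ℝ≥0∞) * ENNReal.ofReal B₂ := by
          rw [Finset.sum_const, Finset.card_univ, Fintype.card_fin, nsmul_eq_mul]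
  -- assembly
  have hsetω : {ω | 1 / ((NB : ℝ) * (NF : ℝ)) * ∑ j, ∑ s, X j s ω - C > t} = T ⁻¹' Sx := rfl
  rw [hsetω, htransfer hSxm, lintegral_congr hm'Sx]
  have hlint : ∫⁻ a, K a SxF ∂νB
      ≤ (NB : ℝ≥0∞) * ENNReal.ofReal B₂ + ENNReal.ofReal B₁ := by
    calc ∫⁻ a, K a SxF ∂νB
        ≤ ∫⁻ a, ((NB : ℝ≥0∞) * ENNReal.ofReal B₂ + Hb.indicator 1 a) ∂νB :=
        lintegral_mono_ae hkey
    _ = (NB : ℝ≥0∞) * ENNReal.ofReal B₂ + νB Hb := by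
        rw [lintegral_add_left measurable_const, lintegral_const, measure_univ, mul_one,
          lintegral_indicator_one hHbm]
    _ ≤ (NB : ℝ≥0∞) * ENNReal.ofReal B₂ + ENNReal.ofReal B₁ := by
        exact add_le_add le_rfl
          ((ENNReal.le_ofReal_iff_toReal_le (measure_ne_top _ _) hB₁0).2 hbase)
  have hfin : ((NB : ℝ≥0∞) * ENNReal.ofReal B₂ + ENNReal.ofReal B₁) ≠ ⊤ :=
    ENNReal.add_ne_top.2 ⟨ENNReal.mul_ne_top (ENNReal.natCast_ne_top _)
      ENNReal.ofReal_ne_top, ENNReal.ofReal_ne_top⟩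
  calc (∫⁻ a, K a SxF ∂νB).toReal
      ≤ ((NB : ℝ≥0∞) * ENNReal.ofReal B₂ + ENNReal.ofReal B₁).toReal :=
      ENNReal.toReal_mono hfin hlint
  _ = (NB : ℝ) * B₂ + B₁ := by
      rw [ENNReal.toReal_add (ENNReal.mul_ne_top (ENNReal.natCast_ne_top _)
        ENNReal.ofReal_ne_top) ENNReal.ofReal_ne_top, ENNReal.toReal_mul,
        ENNReal.toReal_ofReal hB₂0, ENNReal.toReal_ofReal hB₁0, ENNReal.toReal_natCast]
  _ ≤ (NB : ℝ) * Real.exp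
            (-((1 / 2 * (1 - θ) ^ 2 * (NF : ℝ) * t ^ 2)
              / (σ₂ ^ 2 + 1 / 3 * (M₀ + M₁) * (1 - θ) * t)))
        + Real.exp
            (-((1 / 2 * θ ^ 2 * (NB : ℝ) * t ^ 2)
              / (σ₁ ^ 2 + 1 / 3 * (M₁ + M₂) * θ * t))) := by
      have e2 : B₂ = Real.exp
          (-((1 / 2 * (1 - θ) ^ 2 * (NF : ℝ) * t ^ 2)
              / (σ₂ ^ 2 + 1 / 3 * (M₀ + M₁) * (1 - θ) * t))) := by
        rw [hB₂_def, hu₂_def]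
        congr 1
        rw [show (NF : ℝ) * ((1 - θ) * t) ^ 2 / 2 = 1 / 2 * (1 - θ) ^ 2 * (NF : ℝ) * t ^ 2
            from by ring,
          show σ₂ ^ 2 + (M₀ + M₁) * ((1 - θ) * t) / 3
              = σ₂ ^ 2 + 1 / 3 * (M₀ + M₁) * (1 - θ) * t from by ring]
      have e1 : B₁ = Real.exp
          (-((1 / 2 * θ ^ 2 * (NB : ℝ) * t ^ 2)
              / (σ₁ ^ 2 + 1 / 3 * (M₁ + M₂) * θ * t))) := by
        rw [hB₁_def, hu₁_def]
        congr 1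
        rw [show (NB : ℝ) * (θ * t) ^ 2 / 2 = 1 / 2 * θ ^ 2 * (NB : ℝ) * t ^ 2
            from by ring,
          show σ₁ ^ 2 + (M₁ + M₂) * (θ * t) / 3
              = σ₁ ^ 2 + 1 / 3 * (M₁ + M₂) * θ * t from by ring]
      rw [e2, e1]
end

section
/- Let κ₁, …, κ_n be positive integers with κ = κ₁ + ⋯ + κ_n, and partition the index set {1, …, κ} into consecutive blocks of sizes κ₁, …, κ_n. Let L be a real symmetric κ×κ matrix with spectral decomposition L = Σ_{l=0}^{κ−1} λ_l v_l v_lᵀ, where {v_0, …, v_{κ−1}} is an orthonormal basis of ℝ^κ and all λ_l ≥ 0. For a column vector v ∈ ℝ^κ write v_{[j]} ∈ ℝ^{κ_j} for its j-th segment, and for a κ×κ matrix M write M_{ij} for its (i,j)-th block (the κ_i × κ_j submatrix with rows in block i and columns in block j). For a positive integer t, define the horizontal base diffusion map V^t(j) ∈ ℝ^{κ²} by V^t(j) = ( λ_l^{t/2} λ_m^{t/2} ⟨v_{l[j]}, v_{m[j]}⟩ )_{0 ≤ l,m ≤ κ−1}. Then for all 1 ≤ i, j ≤ n: (i) the (i,j)-th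 block of L^t equals Σ_{l=0}^{κ−1} λ_l^t v_{l[i]} v_{l[j]}ᵀ, and (ii) the squared Frobenius norm of this block satisfies ‖(L^t)_{ij}‖_F² = Σ_{l,m=0}^{κ−1} λ_l^t λ_m^t ⟨v_{m[i]}, v_{l[i]}⟩ ⟨v_{l[j]}, v_{m[j]}⟩ = ⟨V^t(i), V^t(j)⟩, where ⟨·,·⟩ on the right is the standard Euclidean inner product on ℝ^{κ²}. -/
open Matrix

set_option linter.unusedSectionVars false
set_option linter.unusedVariables false
set_option linter.unusedTactic false

section Aux
variable {ι ι' : Type*} [Fintype ι] [DecidableEq ι] [Fintype ι']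

omit [DecidableEq ι] in
lemma sum_vmv_apply (c : ι → ℝ) (v : ι → ι' → ℝ) (a b : ι') :
    (∑ l, c l • vecMulVec (v l) (v l)) a b = ∑ l, c l * (v l a * v l b) := by
  simp [Matrix.sum_apply, vecMulVec_apply]

lemma vmv_mul (c d : ι → ℝ) (v : ι → ι' → ℝ)
    (hortho : ∀ l m, dotProduct (v l) (v m) = if l = m then (1 : ℝ) else 0) :
    (∑ l, c l • vecMulVec (v l) (v l)) * (∑ l, d l • vecMulVec (v l) (v l))
      = ∑ l, (c l * d l) • vecMulVec (v l) (v l) := by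
  ext a b
  rw [Matrix.mul_apply]
  simp only [sum_vmv_apply]
  have : ∀ x : ι', (∑ l, c l * (v l a * v l x)) * (∑ m, d m * (v m x * v m b))
      = ∑ l, ∑ m, (c l * v l a * (d m * v m b)) * (v l x * v m x) := by
    intro x
    rw [Finset.sum_mul_sum]
    apply Finset.sum_congr rfl; intros; apply Finset.sum_congr rfl; intros; ring
  simp_rw [this]
  rw [Finset.sum_comm]
  have h2 : ∀ l : ι, ∑ x : ι', ∑ m : ι, (c l * v l a * (d m * v m b)) * (v l x * v m x)
      = c l * d l * (v l a * v l b) := by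
    intro l
    rw [Finset.sum_comm]
    have : ∀ m : ι, ∑ x : ι', (c l * v l a * (d m * v m b)) * (v l x * v m x)
        = (c l * v l a * (d m * v m b)) * (if l = m then (1:ℝ) else 0) := by
      intro m
      rw [← Finset.mul_sum, ← hortho l m, dotProduct]
    simp_rw [this, mul_ite, mul_one, mul_zero]
    rw [Finset.sum_ite_eq Finset.univ l (fun m => c l * v l a * (d m * v m b))]
    simp; ring
  simp_rw [h2]
end Aux

lemma vmv_pow {ι ι' : Type*} [Fintype ι] [DecidableEq ι] [Fintype ι'] [DecidableEq ι']
    [Nonempty ι'] (c : ι → ℝ) (v : ι → ι' → ℝ)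
    (hortho : ∀ l m, dotProduct (v l) (v m) = if l = m then (1 : ℝ) else 0) :
    ∀ t : ℕ, 0 < t →
      (∑ l, c l • vecMulVec (v l) (v l)) ^ t = ∑ l, (c l ^ t) • vecMulVec (v l) (v l) := by
  intro t ht
  induction t with
  | zero => omega
  | succ k ih =>
    rcases Nat.eq_zero_or_pos k with hk | hk
    · subst hk; simp
    · rw [pow_succ, ih hk, vmv_mul _ _ _ hortho]
      simp [pow_succ]

lemma rpow_half_sq (x : ℝ) (hx : 0 ≤ x) (t : ℕ) (ht : 0 < t) :
    x ^ ((t : ℝ) / 2) * x ^ ((t : ℝ) / 2) = x ^ t := by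
  rw [← Real.rpow_natCast x t, ← Real.rpow_add' hx (by push_cast; norm_num; positivity)]
  norm_num


lemma sum4 {A B C D : Type*} [Fintype A] [Fintype B] [Fintype C] [Fintype D]
    (f : A → B → C → D → ℝ) :
    ∑ a, ∑ b, ∑ c, ∑ d, f a b c d = ∑ c, ∑ d, ∑ a, ∑ b, f a b c d := by
  have := Finset.sum_comm (s := Finset.univ (α := A × B)) (t := Finset.univ (α := C × D))
    (f := fun p q => f p.1 p.2 q.1 q.2)
  simpa [Fintype.sum_prod_type] using this


/-- Block structure of powers of a positive-semidefinite matrix given by a spectral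
decomposition, and the resulting horizontal-base-diffusion-map inner product identity.
The index set `{1,…,κ}` (with `κ = κ₁ + ⋯ + κₙ`) is partitioned into `n` blocks,
modelled by the sigma type `(j : Fin n) × Fin (κ j)`; `v l ⟨j, s⟩` is the `s`-th entry
of the `j`-th segment `v_{l[j]}` of the eigenvector `v l`. -/
theorem stmt2 (n : ℕ) (hn : 0 < n) (κ : Fin n → ℕ) (hκ : ∀ j, 0 < κ j)
    (N : ℕ) (hN : N = ∑ j, κ j)
    (L : Matrix ((j : Fin n) × Fin (κ j)) ((j : Fin n) × Fin (κ j)) ℝ)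
    (lam : Fin N → ℝ) (hlam : ∀ l, 0 ≤ lam l)
    (v : Fin N → ((j : Fin n) × Fin (κ j)) → ℝ)
    (hortho : ∀ l m, dotProduct (v l) (v m) = if l = m then (1 : ℝ) else 0)
    (hspec : L = ∑ l, lam l • vecMulVec (v l) (v l))
    (t : ℕ) (ht : 0 < t)
    (V : Fin n → (Fin N × Fin N) → ℝ)
    (hV : ∀ j lm, V j lm
      = lam lm.1 ^ ((t : ℝ) / 2) * lam lm.2 ^ ((t : ℝ) / 2)
          * ∑ s : Fin (κ j), v lm.1 ⟨j, s⟩ * v lm.2 ⟨j, s⟩) :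
    ∀ i j : Fin n,
      (∀ (r : Fin (κ i)) (s : Fin (κ j)),
        (L ^ t) ⟨i, r⟩ ⟨j, s⟩ = ∑ l, lam l ^ t * v l ⟨i, r⟩ * v l ⟨j, s⟩) ∧
      (∑ r : Fin (κ i), ∑ s : Fin (κ j), ((L ^ t) ⟨i, r⟩ ⟨j, s⟩) ^ 2
        = ∑ l, ∑ m, lam l ^ t * lam m ^ t
            * (∑ r : Fin (κ i), v m ⟨i, r⟩ * v l ⟨i, r⟩)
            * (∑ s : Fin (κ j), v l ⟨j, s⟩ * v m ⟨j, s⟩)) ∧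
      (∑ r : Fin (κ i), ∑ s : Fin (κ j), ((L ^ t) ⟨i, r⟩ ⟨j, s⟩) ^ 2
        = ∑ lm : Fin N × Fin N, V i lm * V j lm) := by
  have : Nonempty ((j : Fin n) × Fin (κ j)) := ⟨⟨⟨0, hn⟩, ⟨0, hκ _⟩⟩⟩
  intro i j
  have hpow := vmv_pow lam v hortho t ht
  have key : ∀ (r : Fin (κ i)) (s : Fin (κ j)),
      (L ^ t) ⟨i, r⟩ ⟨j, s⟩ = ∑ l, lam l ^ t * v l ⟨i, r⟩ * v l ⟨j, s⟩ := by
    intro r s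
    rw [hspec, hpow, sum_vmv_apply]
    exact Finset.sum_congr rfl fun l _ => by ring
  have main : ∑ r : Fin (κ i), ∑ s : Fin (κ j), ((L ^ t) ⟨i, r⟩ ⟨j, s⟩) ^ 2
      = ∑ l, ∑ m, (lam l ^ t * lam m ^ t)
          * (∑ r : Fin (κ i), v l ⟨i, r⟩ * v m ⟨i, r⟩)
          * (∑ s : Fin (κ j), v l ⟨j, s⟩ * v m ⟨j, s⟩) := by
    simp_rw [key, sq, Finset.sum_mul_sum]
    rw [sum4 (fun (r : Fin (κ i)) (s : Fin (κ j)) (l : Fin N) (m : Fin N) =>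
      (lam l ^ t * v l ⟨i, r⟩ * v l ⟨j, s⟩) * (lam m ^ t * v m ⟨i, r⟩ * v m ⟨j, s⟩))]
    refine Finset.sum_congr rfl fun l _ => Finset.sum_congr rfl fun m _ => ?_
    rw [mul_assoc, Finset.sum_mul, Finset.mul_sum]
    refine Finset.sum_congr rfl fun r _ => ?_
    rw [Finset.mul_sum, Finset.mul_sum]
    refine Finset.sum_congr rfl fun s _ => ?_
    ring
  refine ⟨key, ?_, ?_⟩
  · rw [main]
    refine Finset.sum_congr rfl fun l _ => Finset.sum_congr rfl fun m _ => ?_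
    have : (∑ r : Fin (κ i), v l ⟨i, r⟩ * v m ⟨i, r⟩)
        = ∑ r : Fin (κ i), v m ⟨i, r⟩ * v l ⟨i, r⟩ :=
      Finset.sum_congr rfl fun r _ => mul_comm _ _
    rw [this]
  · rw [main, Fintype.sum_prod_type]
    refine Finset.sum_congr rfl fun l _ => Finset.sum_congr rfl fun m _ => ?_
    rw [hV, hV]
    have h1 := rpow_half_sq (lam l) (hlam l) t ht
    have h2 := rpow_half_sq (lam m) (hlam m) t ht
    rw [← h1, ← h2]
    ring
end
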